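/- Let G be a compact subgroup of GL(n,ℝ). Then the group G′ = {g ∈ GL(n,ℝ) : p ∘ g = p for every G-invariant polynomial function p on ℝⁿ} is a compact subset of the space of n×n real matrices. -/

import Mathlib

open Matrix MeasureTheory MvPolynomial

attribute [local instance] Matrix.normedAddCommGroup Matrix.normedSpace

private instance instCENormMat {n : ℕ} : ContinuousENorm (Matrix (Fin n) (Fin n) ℝ) :=
  SeminormedAddGroup.toContinuousENorm

open scoped MatrixOrder

private lemma dot_transpose_mulVec {n : ℕ} (C : Matrix (Fin n) (Fin n) ℝ) (x y : Fin n → ℝ) :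
    x ⬝ᵥ (Cᵀ *ᵥ y) = (C *ᵥ x) ⬝ᵥ y := by
  rw [Matrix.dotProduct_mulVec, Matrix.vecMul_transpose]

private lemma quadform_ext {n : ℕ} {A B : Matrix (Fin n) (Fin n) ℝ}
    (hA : Aᵀ = A) (hB : Bᵀ = B)
    (h : ∀ x : Fin n → ℝ, x ⬝ᵥ (A *ᵥ x) = x ⬝ᵥ (B *ᵥ x)) : A = B := by
  set D := A - B with hD
  have hDsym : Dᵀ = D := by rw [hD, Matrix.transpose_sub, hA, hB]
  have hq : ∀ x : Fin n → ℝ, x ⬝ᵥ (D *ᵥ x) = 0 := by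
    intro x
    rw [hD, Matrix.sub_mulVec, dotProduct_sub, h, sub_self]
  have hdiag : ∀ i, D i i = 0 := by
    intro i
    have := hq (Pi.single i 1)
    simpa [Matrix.mulVec_single, single_dotProduct] using this
  have hbil : ∀ x y : Fin n → ℝ, x ⬝ᵥ (D *ᵥ y) + y ⬝ᵥ (D *ᵥ x) = 0 := by
    intro x y
    have h1 := hq (x + y)
    have h2 := hq x
    have h3 := hq y
    simp only [Matrix.mulVec_add, Matrix.add_mulVec, dotProduct_add, add_dotProduct] at h1
    linarith
  have hoff : ∀ i j, D i j + D j i = 0 := by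
    intro i j
    have := hbil (Pi.single i 1) (Pi.single j 1)
    simpa [Matrix.mulVec_single, single_dotProduct] using this
  have hzero : D = 0 := by
    ext i j
    have h1 := hoff i j
    have h2 : D j i = D i j := by
      conv_lhs => rw [← hDsym]
      rfl
    rw [h2] at h1
    simpa using by linarith
  have := sub_eq_zero.mp (by rw [← hD]; exact hzero)
  exact this

private noncomputable def quadPoly {n : ℕ} (B : Matrix (Fin n) (Fin n) ℝ) :
    MvPolynomial (Fin n) ℝ :=
  ∑ i, ∑ j, MvPolynomial.C (B i j) * MvPolynomial.X i * MvPolynomial.X j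

private lemma eval_quadPoly {n : ℕ} (B : Matrix (Fin n) (Fin n) ℝ) (x : Fin n → ℝ) :
    MvPolynomial.eval x (quadPoly B) = x ⬝ᵥ (B *ᵥ x) := by
  simp only [quadPoly, map_sum, _root_.map_mul, MvPolynomial.eval_C, MvPolynomial.eval_X,
    dotProduct, Matrix.mulVec, Finset.mul_sum]
  refine Finset.sum_congr rfl fun i _ => Finset.sum_congr rfl fun j _ => ?_
  ring

private lemma continuous_mv_eval {n : ℕ} (q : MvPolynomial (Fin n) ℝ) :
    Continuous fun x : Fin n → ℝ => MvPolynomial.eval x q := by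
  induction q using MvPolynomial.induction_on with
  | C a => simpa using continuous_const
  | add p q hp hq => simpa using hp.fun_add hq
  | mul_X p i hp => simpa using hp.fun_mul (continuous_apply i)


/-- If `G` is a compact subgroup of `GL(n, ℝ)`, then the group
`G′` of all `g ∈ GL(n, ℝ)` preserving every `G`-invariant polynomial function on `ℝⁿ`
is a compact subset of the space of `n × n` real matrices. -/
theorem Gprime_isCompact_of_isCompact
    (n : ℕ) (G : Subgroup (GL (Fin n) ℝ))
    (hG : IsCompact {M : Matrix (Fin n) (Fin n) ℝ | ∃ g ∈ G, (g : Matrix (Fin n) (Fin n) ℝ) = M}) :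
    IsCompact {M : Matrix (Fin n) (Fin n) ℝ | ∃ g : GL (Fin n) ℝ,
      (∀ q : MvPolynomial (Fin n) ℝ,
        (∀ h ∈ G, ∀ x : Fin n → ℝ,
          MvPolynomial.eval ((h : Matrix (Fin n) (Fin n) ℝ).mulVec x) q = MvPolynomial.eval x q) →
        ∀ x : Fin n → ℝ,
          MvPolynomial.eval ((g : Matrix (Fin n) (Fin n) ℝ).mulVec x) q = MvPolynomial.eval x q) ∧
      (g : Matrix (Fin n) (Fin n) ℝ) = M} := by
  classical
  set S : Set (Matrix (Fin n) (Fin n) ℝ) :=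
    {M | ∃ g ∈ G, (g : Matrix (Fin n) (Fin n) ℝ) = M} with hS
  -- the embedding of the subgroup into pairs of matrices
  let f : G → (Matrix (Fin n) (Fin n) ℝ) × (Matrix (Fin n) (Fin n) ℝ)ᵐᵒᵖ :=
    fun g => Units.embedProduct _ (g : GL (Fin n) ℝ)
  have hfemb : Topology.IsEmbedding f :=
    (Units.isEmbedding_embedProduct).comp Topology.IsEmbedding.subtypeVal
  -- G is a compact space
  haveI : CompactSpace G := by
    rw [← isCompact_univ_iff]
    rw [hfemb.isCompact_iff]
    have hT : IsCompact ((S ×ˢ S) ∩ {p | p.1 * p.2 = 1}) :=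
      (hG.prod hG).inter_right (isClosed_eq (continuous_fst.matrix_mul continuous_snd)
        continuous_const)
    have himg : f '' Set.univ =
        (fun p : (Matrix (Fin n) (Fin n) ℝ) × (Matrix (Fin n) (Fin n) ℝ) =>
          (p.1, MulOpposite.op p.2)) '' ((S ×ˢ S) ∩ {p | p.1 * p.2 = 1}) := by
      ext p
      constructor
      · rintro ⟨g, -, rfl⟩
        refine ⟨((((g : GL (Fin n) ℝ)) : Matrix (Fin n) (Fin n) ℝ),
            ((((g : GL (Fin n) ℝ))⁻¹ : GL (Fin n) ℝ) : Matrix (Fin n) (Fin n) ℝ)),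
          ⟨⟨⟨(g : GL (Fin n) ℝ), g.2, rfl⟩,
            ⟨((g : GL (Fin n) ℝ))⁻¹, inv_mem g.2, rfl⟩⟩, Units.mul_inv _⟩, rfl⟩
      · rintro ⟨⟨A, B⟩, ⟨⟨⟨u, hu, rfl⟩, ⟨v, hv, rfl⟩⟩, hAB⟩, rfl⟩
        refine ⟨⟨u, hu⟩, Set.mem_univ _, ?_⟩
        have hvu : ((v : GL (Fin n) ℝ) : Matrix (Fin n) (Fin n) ℝ) =
            ((u⁻¹ : GL (Fin n) ℝ) : Matrix (Fin n) (Fin n) ℝ) := by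
          have h1 : ((u : GL (Fin n) ℝ) : Matrix (Fin n) (Fin n) ℝ) *
              ((v : GL (Fin n) ℝ) : Matrix (Fin n) (Fin n) ℝ) = 1 := hAB
          calc ((v : GL (Fin n) ℝ) : Matrix (Fin n) (Fin n) ℝ)
              = (((u⁻¹ : GL (Fin n) ℝ) : Matrix (Fin n) (Fin n) ℝ) *
                  ((u : GL (Fin n) ℝ) : Matrix (Fin n) (Fin n) ℝ)) *
                  ((v : GL (Fin n) ℝ) : Matrix (Fin n) (Fin n) ℝ) := by
                rw [← Units.val_mul, inv_mul_cancel]; simp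
            _ = ((u⁻¹ : GL (Fin n) ℝ) : Matrix (Fin n) (Fin n) ℝ) *
                  (((u : GL (Fin n) ℝ) : Matrix (Fin n) (Fin n) ℝ) *
                  ((v : GL (Fin n) ℝ) : Matrix (Fin n) (Fin n) ℝ)) := by
                rw [Matrix.mul_assoc]
            _ = ((u⁻¹ : GL (Fin n) ℝ) : Matrix (Fin n) (Fin n) ℝ) := by
                rw [h1, Matrix.mul_one]
        show Units.embedProduct _ u = (_, MulOpposite.op ((v : GL (Fin n) ℝ) : Matrix (Fin n) (Fin n) ℝ))
        rw [hvu]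
        rfl
    rw [himg]
    exact hT.image (continuous_fst.prodMk (MulOpposite.continuous_op.comp continuous_snd))
  -- measure-theoretic setup
  haveI : T2Space G := hfemb.t2Space
  letI : MeasurableSpace G := borel G
  haveI : BorelSpace G := ⟨rfl⟩
  haveI : Nonempty G := ⟨1⟩
  let μ : Measure G := Measure.haarMeasure ⊤
  let val2 : G → Matrix (Fin n) (Fin n) ℝ :=
    fun g => ((g : GL (Fin n) ℝ) : Matrix (Fin n) (Fin n) ℝ)
  have hval2c : Continuous val2 := Units.continuous_val.comp continuous_subtype_val
  have hval2mul : ∀ g h : G, val2 (g * h) = val2 g * val2 h := fun g h => rfl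
  let F : G → Matrix (Fin n) (Fin n) ℝ := fun g => (val2 g⁻¹)ᵀ * (val2 g⁻¹)
  have hFc : Continuous F :=
    ((hval2c.comp continuous_inv).matrix_transpose).matrix_mul (hval2c.comp continuous_inv)
  have hFi : Integrable F μ :=
    hFc.integrable_of_hasCompactSupport (HasCompactSupport.of_compactSpace F)
  set B : Matrix (Fin n) (Fin n) ℝ := ∫ g, F g ∂μ with hBdef
  have hswap : ∀ (L : Matrix (Fin n) (Fin n) ℝ →ₗ[ℝ] Matrix (Fin n) (Fin n) ℝ),
      L B = ∫ g, L (F g) ∂μ := by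
    intro L
    calc L B = (LinearMap.toContinuousLinearMap L) (∫ g, F g ∂μ) := rfl
      _ = ∫ g, (LinearMap.toContinuousLinearMap L) (F g) ∂μ :=
          (ContinuousLinearMap.integral_comp_comm _ hFi).symm
      _ = ∫ g, L (F g) ∂μ := rfl
  have hswapR : ∀ (L : Matrix (Fin n) (Fin n) ℝ →ₗ[ℝ] ℝ),
      L B = ∫ g, L (F g) ∂μ := by
    intro L
    calc L B = (LinearMap.toContinuousLinearMap L) (∫ g, F g ∂μ) := rfl
      _ = ∫ g, (LinearMap.toContinuousLinearMap L) (F g) ∂μ :=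
          (ContinuousLinearMap.integral_comp_comm _ hFi).symm
      _ = ∫ g, L (F g) ∂μ := rfl
  let transL : Matrix (Fin n) (Fin n) ℝ →ₗ[ℝ] Matrix (Fin n) (Fin n) ℝ :=
    { toFun := fun A => Aᵀ
      map_add' := fun A A' => Matrix.transpose_add _ _
      map_smul' := fun c A => Matrix.transpose_smul _ _ }
  let conjL : Matrix (Fin n) (Fin n) ℝ → Matrix (Fin n) (Fin n) ℝ →ₗ[ℝ] Matrix (Fin n) (Fin n) ℝ :=
    fun H =>
    { toFun := fun A => Hᵀ * A * H
      map_add' := fun A A' => by rw [Matrix.mul_add, Matrix.add_mul]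
      map_smul' := fun c A => by
        simp [Matrix.mul_smul, Matrix.smul_mul] }
  let qf : (Fin n → ℝ) → Matrix (Fin n) (Fin n) ℝ →ₗ[ℝ] ℝ :=
    fun x =>
    { toFun := fun A => x ⬝ᵥ (A *ᵥ x)
      map_add' := fun A A' => by rw [Matrix.add_mulVec, dotProduct_add]
      map_smul' := fun c A => by
        simp [Matrix.smul_mulVec, dotProduct_smul] }
  have hBsym : Bᵀ = B := by
    have h2 : ∀ g : G, transL (F g) = F g := by
      intro g
      show ((val2 g⁻¹)ᵀ * val2 g⁻¹)ᵀ = _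
      rw [Matrix.transpose_mul, Matrix.transpose_transpose]
    calc Bᵀ = transL B := rfl
      _ = ∫ g, transL (F g) ∂μ := hswap transL
      _ = ∫ g, F g ∂μ := by simp only [h2]
      _ = B := rfl
  have hBinv : ∀ h : G, (val2 h)ᵀ * B * (val2 h) = B := by
    intro h
    have key : ∀ g : G, conjL (val2 h) (F g) = F (h⁻¹ * g) := by
      intro g
      show (val2 h)ᵀ * ((val2 g⁻¹)ᵀ * val2 g⁻¹) * val2 h
          = (val2 (h⁻¹ * g)⁻¹)ᵀ * val2 (h⁻¹ * g)⁻¹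
      have hinv : (h⁻¹ * g)⁻¹ = g⁻¹ * h := by group
      rw [hinv, hval2mul, Matrix.transpose_mul]
      simp only [Matrix.mul_assoc]
    calc (val2 h)ᵀ * B * val2 h = conjL (val2 h) B := rfl
      _ = ∫ g, conjL (val2 h) (F g) ∂μ := hswap _
      _ = ∫ g, F (h⁻¹ * g) ∂μ := by simp only [key]
      _ = ∫ g, F g ∂μ := integral_mul_left_eq_self F h⁻¹
      _ = B := rfl
  have hφeq : ∀ (x : Fin n → ℝ) (g : G),
      x ⬝ᵥ (F g *ᵥ x) = (val2 g⁻¹ *ᵥ x) ⬝ᵥ (val2 g⁻¹ *ᵥ x) := by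
    intro x g
    show x ⬝ᵥ (((val2 g⁻¹)ᵀ * val2 g⁻¹) *ᵥ x) = _
    rw [← Matrix.mulVec_mulVec, dot_transpose_mulVec]
  have hBpd : B.PosDef := by
    refine Matrix.PosDef.of_dotProduct_mulVec_pos ?_ ?_
    · show Bᴴ = B
      have h3 : Bᴴ = Bᵀ := by
        ext i j
        simp [Matrix.conjTranspose_apply]
      rw [h3, hBsym]
    · intro x hx
      have hstar : star x = x := by simp
      rw [hstar]
      have h1 : x ⬝ᵥ (B *ᵥ x) = ∫ g, x ⬝ᵥ (F g *ᵥ x) ∂μ := hswapR (qf x)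
      have hφc : Continuous fun g : G => x ⬝ᵥ (F g *ᵥ x) :=
        ((LinearMap.toContinuousLinearMap (qf x)).continuous).comp hFc
      have hφi : Integrable (fun g : G => x ⬝ᵥ (F g *ᵥ x)) μ :=
        (LinearMap.toContinuousLinearMap (qf x)).integrable_comp hFi
      have hnn : (0 : G → ℝ) ≤ fun g : G => x ⬝ᵥ (F g *ᵥ x) := by
        intro g
        show (0:ℝ) ≤ x ⬝ᵥ (F g *ᵥ x)
        rw [hφeq x g]
        exact Finset.sum_nonneg fun i _ => mul_self_nonneg _
      show (0:ℝ) < x ⬝ᵥ (B *ᵥ x)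
      rw [h1, integral_pos_iff_support_of_nonneg hnn hφi]
      have hopen : IsOpen (Function.support fun g : G => x ⬝ᵥ (F g *ᵥ x)) := by
        have : (Function.support fun g : G => x ⬝ᵥ (F g *ᵥ x))
            = (fun g : G => x ⬝ᵥ (F g *ᵥ x)) ⁻¹' ({0}ᶜ) := by
          ext g
          simp [Function.mem_support]
        rw [this]
        exact isOpen_compl_singleton.preimage hφc
      refine hopen.measure_pos μ ⟨1, ?_⟩
      have hF1 : F 1 = 1 := by
        show (val2 1⁻¹)ᵀ * val2 1⁻¹ = 1
        have : val2 1⁻¹ = 1 := by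
          rw [inv_one]
          rfl
        rw [this, Matrix.transpose_one, Matrix.mul_one]
      simp only [Function.mem_support, hF1, Matrix.one_mulVec]
      intro h0
      exact hx (dotProduct_self_eq_zero.mp h0)
  -- square root of B
  have hCps : B.PosSemidef := hBpd.posSemidef
  set C : Matrix (Fin n) (Fin n) ℝ := CFC.sqrt B with hCdef
  have hCC : C * C = B := CFC.sqrt_mul_sqrt_self B hCps.nonneg
  have hCsym : Cᵀ = C := by
    have h := (CFC.sqrt_nonneg B).posSemidef.isHermitian
    calc Cᵀ = Cᴴ := by ext i j; simp [Matrix.conjTranspose_apply]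
      _ = C := h
  have hdetB : B.det ≠ 0 := ne_of_gt hBpd.det_pos
  have hdetC : IsUnit C.det := by
    have hCCdet : C.det * C.det = B.det := by rw [← Matrix.det_mul, hCC]
    have hC0 : C.det ≠ 0 := by
      intro h0
      exact hdetB (by rw [← hCCdet, h0, mul_zero])
    exact hC0.isUnit
  have hCinv1 : C * C⁻¹ = 1 := Matrix.mul_nonsing_inv C hdetC
  have hCinv2 : C⁻¹ * C = 1 := Matrix.nonsing_inv_mul C hdetC
  -- the invariant quadratic polynomial
  have hqBinv : ∀ h ∈ G, ∀ x : Fin n → ℝ,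
      MvPolynomial.eval ((h : Matrix (Fin n) (Fin n) ℝ).mulVec x) (quadPoly B)
        = MvPolynomial.eval x (quadPoly B) := by
    intro h hh x
    have hB' : ((h : Matrix (Fin n) (Fin n) ℝ))ᵀ * B * (h : Matrix (Fin n) (Fin n) ℝ) = B :=
      hBinv ⟨h, hh⟩
    rw [eval_quadPoly, eval_quadPoly]
    have hkey : ((h : Matrix (Fin n) (Fin n) ℝ) *ᵥ x) ⬝ᵥ
          (B *ᵥ ((h : Matrix (Fin n) (Fin n) ℝ) *ᵥ x))
        = x ⬝ᵥ ((((h : Matrix (Fin n) (Fin n) ℝ))ᵀ * B * (h : Matrix (Fin n) (Fin n) ℝ)) *ᵥ x) := by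
      rw [← Matrix.mulVec_mulVec, ← Matrix.mulVec_mulVec, dot_transpose_mulVec]
    show ((h : Matrix (Fin n) (Fin n) ℝ) *ᵥ x) ⬝ᵥ
        (B *ᵥ ((h : Matrix (Fin n) (Fin n) ℝ) *ᵥ x)) = x ⬝ᵥ (B *ᵥ x)
    rw [hkey, hB']
  -- invariance of quadPoly B forces the quadratic relation
  have hmemQuad : ∀ M : Matrix (Fin n) (Fin n) ℝ,
      (∀ x, MvPolynomial.eval (M.mulVec x) (quadPoly B) = MvPolynomial.eval x (quadPoly B)) →
      Mᵀ * B * M = B := by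
    intro M hM
    refine quadform_ext ?_ hBsym ?_
    · rw [Matrix.transpose_mul, Matrix.transpose_mul, Matrix.transpose_transpose, hBsym]
      simp only [Matrix.mul_assoc]
    · intro x
      have hMx := hM x
      rw [eval_quadPoly, eval_quadPoly] at hMx
      calc x ⬝ᵥ ((Mᵀ * B * M) *ᵥ x) = (M *ᵥ x) ⬝ᵥ (B *ᵥ (M *ᵥ x)) := by
            rw [← Matrix.mulVec_mulVec, ← Matrix.mulVec_mulVec, dot_transpose_mulVec]
        _ = x ⬝ᵥ (B *ᵥ x) := hMx
  -- the invariance predicate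
  set Pinv : MvPolynomial (Fin n) ℝ → Prop := fun q =>
    ∀ h ∈ G, ∀ x : Fin n → ℝ,
      MvPolynomial.eval ((h : Matrix (Fin n) (Fin n) ℝ).mulVec x) q = MvPolynomial.eval x q
    with hPinv
  set K : Set (Matrix (Fin n) (Fin n) ℝ) := {M |
      (∀ q : MvPolynomial (Fin n) ℝ, Pinv q → ∀ x : Fin n → ℝ,
        MvPolynomial.eval (M.mulVec x) q = MvPolynomial.eval x q) ∧ Mᵀ * B * M = B}
    with hK
  have hEq : {M : Matrix (Fin n) (Fin n) ℝ | ∃ g : GL (Fin n) ℝ,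
      (∀ q : MvPolynomial (Fin n) ℝ,
        (∀ h ∈ G, ∀ x : Fin n → ℝ,
          MvPolynomial.eval ((h : Matrix (Fin n) (Fin n) ℝ).mulVec x) q = MvPolynomial.eval x q) →
        ∀ x : Fin n → ℝ,
          MvPolynomial.eval ((g : Matrix (Fin n) (Fin n) ℝ).mulVec x) q = MvPolynomial.eval x q) ∧
      (g : Matrix (Fin n) (Fin n) ℝ) = M} = K := by
    ext M
    constructor
    · rintro ⟨g, hg, rfl⟩
      exact ⟨hg, hmemQuad _ (hg (quadPoly B) hqBinv)⟩
    · rintro ⟨hP, hq⟩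
      have hdetM : IsUnit M.det := by
        have h1 := congrArg Matrix.det hq
        rw [Matrix.det_mul, Matrix.det_mul, Matrix.det_transpose] at h1
        have hM0 : M.det ≠ 0 := by
          intro h0
          rw [h0, zero_mul, mul_zero] at h1
          exact hdetB h1.symm
        exact hM0.isUnit
      obtain ⟨u, hu⟩ := (Matrix.isUnit_iff_isUnit_det M).mpr hdetM
      exact ⟨u, fun q hqq x => by rw [hu]; exact hP q hqq x, hu⟩
  rw [hEq]
  -- K is closed
  have hclosed : IsClosed K := by
    have hK2 : K = {M : Matrix (Fin n) (Fin n) ℝ |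
        ∀ q : MvPolynomial (Fin n) ℝ, Pinv q → ∀ x : Fin n → ℝ,
          MvPolynomial.eval (M.mulVec x) q = MvPolynomial.eval x q}
        ∩ {M | Mᵀ * B * M = B} := rfl
    rw [hK2]
    refine IsClosed.inter ?_ ?_
    · have h3 : {M : Matrix (Fin n) (Fin n) ℝ |
          ∀ q : MvPolynomial (Fin n) ℝ, Pinv q → ∀ x : Fin n → ℝ,
            MvPolynomial.eval (M.mulVec x) q = MvPolynomial.eval x q}
          = ⋂ (q : MvPolynomial (Fin n) ℝ), ⋂ (_ : Pinv q), ⋂ (x : Fin n → ℝ),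
            {M : Matrix (Fin n) (Fin n) ℝ |
              MvPolynomial.eval (M.mulVec x) q = MvPolynomial.eval x q} := by
        ext M
        simp only [Set.mem_setOf_eq, Set.mem_iInter]
      rw [h3]
      refine isClosed_iInter fun q => isClosed_iInter fun _ => isClosed_iInter fun x =>
        isClosed_eq ?_ continuous_const
      exact (continuous_mv_eval q).comp (continuous_id.matrix_mulVec continuous_const)
    · exact isClosed_eq
        (((continuous_id.matrix_transpose).matrix_mul continuous_const).matrix_mul continuous_id)
        continuous_const
  -- the "orthogonal group" of C is compact
  have hOc : IsCompact {N : Matrix (Fin n) (Fin n) ℝ | Nᵀ * N = 1} := by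
    have hsub : {N : Matrix (Fin n) (Fin n) ℝ | Nᵀ * N = 1}
        ⊆ Set.univ.pi fun _ : Fin n => Set.univ.pi fun _ : Fin n => Set.Icc (-1 : ℝ) 1 := by
      intro N hN
      refine Set.mem_univ_pi.mpr fun i => Set.mem_univ_pi.mpr fun j => ?_
      have h1 : ∑ k, N k j * N k j = 1 := by
        have h2 := congrFun (congrFun hN j) j
        simpa [Matrix.mul_apply, Matrix.transpose_apply, Matrix.one_apply] using h2
      have h2 : N i j * N i j ≤ 1 := by
        rw [← h1]
        exact Finset.single_le_sum (f := fun k => N k j * N k j)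
          (fun k _ => mul_self_nonneg _) (Finset.mem_univ i)
      exact abs_le.mp (abs_le_one_iff_mul_self_le_one.mpr h2)
    refine IsCompact.of_isClosed_subset ?_ ?_ hsub
    · exact isCompact_univ_pi fun i => isCompact_univ_pi fun j => isCompact_Icc
    · exact isClosed_eq ((continuous_id.matrix_transpose).matrix_mul continuous_id)
        continuous_const
  -- K is contained in a continuous image of that compact set
  have hsubK : K ⊆ (fun N => C⁻¹ * N * C) '' {N : Matrix (Fin n) (Fin n) ℝ | Nᵀ * N = 1} := by
    rintro M ⟨-, hq⟩
    refine ⟨C * M * C⁻¹, ?_, ?_⟩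
    · show (C * M * C⁻¹)ᵀ * (C * M * C⁻¹) = 1
      have ht : (C * M * C⁻¹)ᵀ = C⁻¹ * (Mᵀ * C) := by
        rw [Matrix.transpose_mul, Matrix.transpose_mul, Matrix.transpose_nonsing_inv, hCsym]
      rw [ht]
      calc C⁻¹ * (Mᵀ * C) * (C * M * C⁻¹)
          = C⁻¹ * (Mᵀ * (C * C) * (M * C⁻¹)) := by simp only [Matrix.mul_assoc]
        _ = C⁻¹ * (Mᵀ * B * (M * C⁻¹)) := by rw [hCC]
        _ = C⁻¹ * ((Mᵀ * B * M) * C⁻¹) := by simp only [Matrix.mul_assoc]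
        _ = C⁻¹ * (B * C⁻¹) := by rw [hq]
        _ = C⁻¹ * (C * (C * C⁻¹)) := by rw [← hCC]; simp only [Matrix.mul_assoc]
        _ = 1 := by rw [hCinv1, Matrix.mul_one, hCinv2]
    · show C⁻¹ * (C * M * C⁻¹) * C = M
      calc C⁻¹ * (C * M * C⁻¹) * C
          = (C⁻¹ * C) * (M * (C⁻¹ * C)) := by simp only [Matrix.mul_assoc]
        _ = M := by rw [hCinv2, Matrix.mul_one, Matrix.one_mul]
  exact IsCompact.of_isClosed_subset
    (hOc.image ((continuous_const.matrix_mul continuous_id).matrix_mul continuous_const))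
    hclosed hsubK
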